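/- arXiv:2007.02776 — 2 statements merged into one kernel-verified Lean document; each statement's English description precedes it below -/
import Mathlib

section
/- Let f: ℝⁿ → ℝⁿ be differentiable with Lipschitz derivative on a neighborhood of ξ, f(ξ) = 0, and suppose the matrix M = I − m^{-1} f'(ξ) satisfies ‖M‖ < 1 for a nonzero constant m. Then there exists δ > 0 such that for every x_0 ∈ B(ξ, δ), the parallel chord iteration x_{i+1} = x_i − m^{-1} f(x_i) converges to ξ at least linearly. -/
open Filter Topology Metric

/-- Local linear convergence of the parallel chord method
x_{i+1} = x_i − m⁻¹ f(x_i), provided f is differentiable with Lipschitz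
derivative near the root ξ and ‖I − m⁻¹ f'(ξ)‖ < 1. -/
theorem parallel_chord_local_linear_convergence (n : ℕ)
    (f : EuclideanSpace ℝ (Fin n) → EuclideanSpace ℝ (Fin n))
    (ξ : EuclideanSpace ℝ (Fin n))
    (hroot : f ξ = 0)
    (ε : ℝ) (hε : 0 < ε)
    (hdiff : ∀ x ∈ ball ξ ε, DifferentiableAt ℝ f x)
    (K : NNReal) (hLip : LipschitzOnWith K (fderiv ℝ f) (ball ξ ε))
    (m : ℝ) (hm : m ≠ 0)
    (hM : ‖ContinuousLinearMap.id ℝ (EuclideanSpace ℝ (Fin n)) -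
      m⁻¹ • fderiv ℝ f ξ‖ < 1) :
    ∃ δ > 0, ∀ x : ℕ → EuclideanSpace ℝ (Fin n),
      x 0 ∈ ball ξ δ → (∀ i, x (i + 1) = x i - m⁻¹ • f (x i)) →
      Tendsto x atTop (𝓝 ξ) ∧
      ∃ C < (1 : ℝ), ∃ k : ℕ, ∀ i ≥ k, ‖x (i + 1) - ξ‖ ≤ C * ‖x i - ξ‖ := by
  set c : ℝ := ‖ContinuousLinearMap.id ℝ (EuclideanSpace ℝ (Fin n)) -
      m⁻¹ • fderiv ℝ f ξ‖ with hc
  have hc0 : 0 ≤ c := norm_nonneg _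
  set C : ℝ := (1 + c) / 2 with hC
  have hC1 : C < 1 := by rw [hC]; linarith
  have hC0 : 0 < C := by rw [hC]; linarith
  have hden : 0 < |m⁻¹| * (K : ℝ) + 1 := by positivity
  set δ : ℝ := min (ε / 2) ((1 - c) / (2 * (|m⁻¹| * (K : ℝ) + 1))) with hδ
  have hδ0 : 0 < δ := by
    apply lt_min (by linarith)
    apply div_pos (by linarith) (by linarith)
  have hδε : δ < ε := lt_of_le_of_lt (min_le_left _ _) (by linarith)
  -- key derivative bound on ball ξ δ
  have hball : ∀ y ∈ ball ξ δ, y ∈ ball ξ ε := fun y hy =>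
    mem_ball.2 (lt_of_lt_of_le (mem_ball.1 hy) hδε.le)
  set Φ : EuclideanSpace ℝ (Fin n) → EuclideanSpace ℝ (Fin n) :=
    fun y => y - m⁻¹ • f y with hΦ
  set A : EuclideanSpace ℝ (Fin n) →
      EuclideanSpace ℝ (Fin n) →L[ℝ] EuclideanSpace ℝ (Fin n) :=
    fun y => ContinuousLinearMap.id ℝ (EuclideanSpace ℝ (Fin n)) -
      m⁻¹ • fderiv ℝ f y with hA
  have hΦderiv : ∀ y ∈ ball ξ δ, HasFDerivAt Φ (A y) y := by
    intro y hy
    exact (hasFDerivAt_id y).sub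
      (((hdiff y (hball y hy)).hasFDerivAt).const_smul m⁻¹)
  have hAbound : ∀ y ∈ ball ξ δ, ‖A y‖ ≤ C := by
    intro y hy
    have h1 : A y = (ContinuousLinearMap.id ℝ (EuclideanSpace ℝ (Fin n)) -
        m⁻¹ • fderiv ℝ f ξ) + m⁻¹ • (fderiv ℝ f ξ - fderiv ℝ f y) := by
      rw [hA]; simp only [smul_sub]; abel
    have h2 : ‖fderiv ℝ f ξ - fderiv ℝ f y‖ ≤ (K : ℝ) * δ := by
      have := hLip.dist_le_mul ξ (mem_ball_self hε) y (hball y hy)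
      rw [dist_eq_norm] at this
      calc ‖fderiv ℝ f ξ - fderiv ℝ f y‖ ≤ (K : ℝ) * dist ξ y := this
        _ ≤ (K : ℝ) * δ := by
            have : dist ξ y ≤ δ := by
              rw [dist_comm]; exact (mem_ball.1 hy).le
            exact mul_le_mul_of_nonneg_left this K.coe_nonneg
    have h3 : |m⁻¹| * ((K : ℝ) * δ) ≤ (1 - c) / 2 := by
      have hδle : δ ≤ (1 - c) / (2 * (|m⁻¹| * (K : ℝ) + 1)) := min_le_right _ _
      have h4 : |m⁻¹| * (K : ℝ) * δ ≤ (|m⁻¹| * (K : ℝ) + 1) * δ := by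
        nlinarith [abs_nonneg m⁻¹, K.coe_nonneg, hδ0.le]
      have h5 : (|m⁻¹| * (K : ℝ) + 1) * δ ≤ (1 - c) / 2 := by
        rw [div_mul_eq_div_div] at hδle
        calc (|m⁻¹| * (K : ℝ) + 1) * δ
            ≤ (|m⁻¹| * (K : ℝ) + 1) * ((1 - c) / 2 / (|m⁻¹| * (K : ℝ) + 1)) :=
              mul_le_mul_of_nonneg_left hδle (by linarith)
          _ = (1 - c) / 2 := by field_simp
      linarith [h4, h5]
    calc ‖A y‖ ≤ c + ‖m⁻¹ • (fderiv ℝ f ξ - fderiv ℝ f y)‖ := by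
          rw [h1]; exact norm_add_le_of_le le_rfl le_rfl
      _ ≤ c + |m⁻¹| * ((K : ℝ) * δ) := by
          rw [norm_smul, Real.norm_eq_abs]
          have := mul_le_mul_of_nonneg_left h2 (abs_nonneg m⁻¹)
          linarith
      _ ≤ c + (1 - c) / 2 := by linarith
      _ = C := by rw [hC]; ring
  -- contraction estimate
  have hcontr : ∀ y ∈ ball ξ δ, ‖Φ y - ξ‖ ≤ C * ‖y - ξ‖ := by
    intro y hy
    have hconv : Convex ℝ (ball ξ δ) := convex_ball ξ δ
    have hΦξ : Φ ξ = ξ := by simp [hΦ, hroot]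
    have := hconv.norm_image_sub_le_of_norm_hasFDerivWithin_le
      (fun z hz => (hΦderiv z hz).hasFDerivWithinAt)
      (fun z hz => hAbound z hz) (mem_ball_self hδ0) hy
    rwa [hΦξ] at this
  refine ⟨δ, hδ0, fun x hx0 hiter => ?_⟩
  have hstep : ∀ y ∈ ball ξ δ, Φ y ∈ ball ξ δ := by
    intro y hy
    rw [mem_ball, dist_eq_norm]
    calc ‖Φ y - ξ‖ ≤ C * ‖y - ξ‖ := hcontr y hy
      _ < 1 * δ := by
          apply mul_lt_mul' hC1.le _ (norm_nonneg _) one_pos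
          rw [← dist_eq_norm]; exact mem_ball.1 hy
      _ = δ := one_mul δ
  have hmem : ∀ i, x i ∈ ball ξ δ := by
    intro i
    induction i with
    | zero => exact hx0
    | succ i ih =>
      rw [hiter i]
      exact hstep (x i) ih
  have hkey : ∀ i, ‖x (i + 1) - ξ‖ ≤ C * ‖x i - ξ‖ := by
    intro i
    rw [hiter i]
    exact hcontr (x i) (hmem i)
  have hgeo : ∀ i, ‖x i - ξ‖ ≤ C ^ i * ‖x 0 - ξ‖ := by
    intro i
    induction i with
    | zero => simp
    | succ i ih =>
      calc ‖x (i + 1) - ξ‖ ≤ C * ‖x i - ξ‖ := hkey i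
        _ ≤ C * (C ^ i * ‖x 0 - ξ‖) := mul_le_mul_of_nonneg_left ih hC0.le
        _ = C ^ (i + 1) * ‖x 0 - ξ‖ := by ring
  constructor
  · rw [tendsto_iff_norm_sub_tendsto_zero]
    have hlim : Tendsto (fun i => C ^ i * ‖x 0 - ξ‖) atTop (𝓝 0) := by
      have := (tendsto_pow_atTop_nhds_zero_of_lt_one hC0.le hC1).mul_const ‖x 0 - ξ‖
      simpa using this
    exact squeeze_zero (fun i => norm_nonneg _) hgeo hlim
  · exact ⟨C, hC1, 0, fun i _ => hkey i⟩
end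

section
/- Let Φ: ℝⁿ → ℝⁿ be differentiable at a point ξ with Φ(ξ) = ξ, suppose the iteration x_{i+1} = Φ(x_i) produces a sequence with x_i → ξ and x_i ≠ ξ for all i, and suppose Φ'(ξ) ≠ 0 with the additional property that liminf_{i→∞} ‖Φ'(ξ)(x_i − ξ)‖/‖x_i − ξ‖ = c > 0. Then the convergence cannot be of order p for any p > 1: for every C ≥ 0 and p > 1, the inequality ‖x_{i+1} − ξ‖ ≤ C‖x_i − ξ‖^p fails for infinitely many i. -/
open Filter Topology

/-- If Φ'(ξ) ≠ 0 and the error directions are not asymptotically annihilated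
by Φ'(ξ) (positive liminf of ‖Φ'(ξ)(x_i − ξ)‖/‖x_i − ξ‖), then the fixed-point
iteration cannot converge with order p for any p > 1. -/
theorem no_superlinear_convergence_of_nonzero_derivative (n : ℕ)
    (Φ : EuclideanSpace ℝ (Fin n) → EuclideanSpace ℝ (Fin n))
    (ξ : EuclideanSpace ℝ (Fin n))
    (hfix : Φ ξ = ξ)
    (hdiff : DifferentiableAt ℝ Φ ξ)
    (x : ℕ → EuclideanSpace ℝ (Fin n))
    (hrec : ∀ i, x (i + 1) = Φ (x i))
    (hlim : Tendsto x atTop (𝓝 ξ))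
    (hne : ∀ i, x i ≠ ξ)
    (hder : fderiv ℝ Φ ξ ≠ 0)
    (c : ℝ) (hc : 0 < c)
    (hliminf : Filter.liminf
      (fun i => ‖(fderiv ℝ Φ ξ) (x i - ξ)‖ / ‖x i - ξ‖) atTop = c) :
    ∀ C ≥ (0 : ℝ), ∀ p > (1 : ℝ),
      ∃ᶠ i in atTop, ¬ (‖x (i + 1) - ξ‖ ≤ C * ‖x i - ξ‖ ^ p) := by
  intro C hC p hp
  set f := fderiv ℝ Φ ξ
  have ht : ∀ i, (0:ℝ) < ‖x i - ξ‖ := fun i =>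
    norm_pos_iff.mpr (sub_ne_zero.mpr (hne i))
  -- eventually ‖f (x i - ξ)‖ > (c/2) * ‖x i - ξ‖
  have hbdd : IsBoundedUnder (· ≥ ·) atTop
      (fun i => ‖f (x i - ξ)‖ / ‖x i - ξ‖) :=
    isBoundedUnder_of ⟨0, fun i => div_nonneg (norm_nonneg _) (norm_nonneg _)⟩
  have hlo : ∀ᶠ i in atTop, c / 2 < ‖f (x i - ξ)‖ / ‖x i - ξ‖ := by
    apply eventually_lt_of_lt_liminf _ hbdd
    rw [hliminf]; linarith
  -- little-o from differentiability
  have hO : (fun i => Φ (x i) - Φ ξ - f (x i - ξ)) =o[atTop] fun i => x i - ξ :=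
    (hdiff.hasFDerivAt.isLittleO).comp_tendsto hlim
  have hsmall : ∀ᶠ i in atTop,
      ‖Φ (x i) - Φ ξ - f (x i - ξ)‖ ≤ c / 4 * ‖x i - ξ‖ :=
    hO.def (by linarith)
  -- C * ‖x i - ξ‖ ^ (p-1) → 0
  have htend0 : Tendsto (fun i => ‖x i - ξ‖) atTop (𝓝 0) := by
    have := (hlim.sub (tendsto_const_nhds (x := ξ))).norm
    simpa using this
  have hpow : Tendsto (fun i => C * ‖x i - ξ‖ ^ (p - 1)) atTop (𝓝 0) := by
    have h1 : Tendsto (fun i => ‖x i - ξ‖ ^ (p - 1)) atTop (𝓝 ((0:ℝ) ^ (p - 1))) :=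
      htend0.rpow_const (Or.inr (by linarith))
    rw [Real.zero_rpow (by linarith)] at h1
    simpa using h1.const_mul C
  have hsm : ∀ᶠ i in atTop, C * ‖x i - ξ‖ ^ (p - 1) < c / 4 :=
    hpow.eventually (gt_mem_nhds (by linarith))
  refine ((hlo.and (hsmall.and hsm)).mono ?_).frequently
  rintro i ⟨h1, h2, h3⟩ hcon
  have hti := ht i
  have h1' : c / 2 * ‖x i - ξ‖ < ‖f (x i - ξ)‖ := (lt_div_iff₀ hti).mp h1
  -- lower bound on next error
  have hlow : c / 4 * ‖x i - ξ‖ ≤ ‖x (i + 1) - ξ‖ := by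
    have htri : ‖f (x i - ξ)‖ ≤ ‖Φ (x i) - Φ ξ‖ + ‖Φ (x i) - Φ ξ - f (x i - ξ)‖ := by
      have := norm_sub_norm_le (f (x i - ξ)) (Φ (x i) - Φ ξ)
      have h := norm_add_le (Φ (x i) - Φ ξ) (f (x i - ξ) - (Φ (x i) - Φ ξ))
      calc ‖f (x i - ξ)‖ = ‖Φ (x i) - Φ ξ + (f (x i - ξ) - (Φ (x i) - Φ ξ))‖ := by
            congr 1; abel
        _ ≤ ‖Φ (x i) - Φ ξ‖ + ‖f (x i - ξ) - (Φ (x i) - Φ ξ)‖ := h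
        _ = ‖Φ (x i) - Φ ξ‖ + ‖Φ (x i) - Φ ξ - f (x i - ξ)‖ := by
            rw [← norm_neg (f (x i - ξ) - (Φ (x i) - Φ ξ))]; congr 1; abel
    have : ‖x (i + 1) - ξ‖ = ‖Φ (x i) - Φ ξ‖ := by rw [hrec i, hfix]
    nlinarith [norm_nonneg (Φ (x i) - Φ ξ - f (x i - ξ))]
  -- upper bound from assumed order-p convergence
  have hup : C * ‖x i - ξ‖ ^ p = C * ‖x i - ξ‖ ^ (p - 1) * ‖x i - ξ‖ := by
    rw [mul_assoc, ← Real.rpow_add_one (ne_of_gt hti)]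
    ring_nf
  rw [hup] at hcon
  nlinarith
end
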